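/- Let X be a set, a, b : X → ℝ functions with 1 ≤ a(x) ≤ 2 ≤ b(x) for all x ∈ X, and let f(x,y) = a(x)b(x)/(a(x)b(x) − y) for 0 < y < a(x) (and 0 otherwise). Then for every s ∈ ℂ with Re(s) > 0 and every x ∈ X, the Mellin transform ∫_0^∞ y^{s−1} f(x,y) dy converges and equals a(x)^s · Σ_{k≥0} b(x)^{−k}/(s+k), where the series converges absolutely. -/

import Mathlib

open MeasureTheory

/-- the Mellin transform of `f(x,y) = a(x)b(x)/(a(x)b(x)−y)` on `0<y<a(x)`
converges for `Re s > 0` and equals `a(x)^s ∑_{k≥0} b(x)^{−k}/(s+k)`. -/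
theorem stmt6 {X : Type*} (a b : X → ℝ) (hab : ∀ x, 1 ≤ a x ∧ a x ≤ 2 ∧ 2 ≤ b x)
    (s : ℂ) (hs : 0 < s.re) (x : X) :
    IntegrableOn
      (fun y : ℝ => (y : ℂ) ^ (s - 1) *
        (if 0 < y ∧ y < a x then (((a x * b x) / (a x * b x - y) : ℝ) : ℂ) else 0))
      (Set.Ioi 0) ∧
    Summable (fun k : ℕ => ‖((b x : ℂ))⁻¹ ^ k / (s + k)‖) ∧
    (∫ y in Set.Ioi (0 : ℝ), (y : ℂ) ^ (s - 1) *
        (if 0 < y ∧ y < a x then (((a x * b x) / (a x * b x - y) : ℝ) : ℂ) else 0))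
      = (a x : ℂ) ^ s * ∑' k : ℕ, ((b x : ℂ))⁻¹ ^ k / (s + k) := by
  obtain ⟨hA1, hA2, hB⟩ := hab x
  set A := a x with hAdef
  set B := b x with hBdef
  have hA0 : (0:ℝ) < A := by linarith
  have hB0 : (0:ℝ) < B := by linarith
  have hC0 : (0:ℝ) < A * B := by positivity
  have hCA : A ≤ A * B / 2 := by nlinarith
  -- notation
  set F : ℝ → ℂ := fun y : ℝ => (y : ℂ) ^ (s - 1) *
        (if 0 < y ∧ y < A then (((A * B) / (A * B - y) : ℝ) : ℂ) else 0) with hF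
  -- F vanishes on [A, ∞)
  have hF0 : ∀ y ∈ Set.Ici A, F y = 0 := by
    intro y hy
    simp only [hF]
    rw [if_neg, mul_zero]
    rintro ⟨-, h2⟩
    exact absurd hy (not_le.2 h2)
  -- On Ioo 0 A, F equals the nice function
  have hFe : ∀ y ∈ Set.Ioo (0:ℝ) A, F y = (y : ℂ) ^ (s - 1) * (((A * B) / (A * B - y) : ℝ) : ℂ) := by
    intro y hy
    simp only [hF, if_pos (show 0 < y ∧ y < A from ⟨hy.1, hy.2⟩)]
  -- key bounds on Ioo
  have hden : ∀ y ∈ Set.Ioo (0:ℝ) A, 0 < A * B - y := fun y hy => by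
    have := hy.2; nlinarith
  have hfrac : ∀ y ∈ Set.Ioo (0:ℝ) A, (A * B) / (A * B - y) ≤ 2 := by
    intro y hy
    rw [div_le_iff₀ (hden y hy)]
    nlinarith [hy.2]
  have hfrac0 : ∀ y ∈ Set.Ioo (0:ℝ) A, 0 ≤ (A * B) / (A * B - y) := by
    intro y hy
    exact div_nonneg hC0.le (hden y hy).le
  -- continuity of nice function on Ioo 0 A
  have hcont : ContinuousOn (fun y : ℝ => (y : ℂ) ^ (s - 1) * (((A * B) / (A * B - y) : ℝ) : ℂ))
      (Set.Ioo (0:ℝ) A) := by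
    apply ContinuousOn.mul
    · intro y hy
      exact (Complex.continuousAt_ofReal_cpow_const y (s-1) (Or.inr hy.1.ne')).continuousWithinAt
    · apply Continuous.comp_continuousOn Complex.continuous_ofReal
      apply ContinuousOn.div continuousOn_const (by fun_prop)
      intro y hy
      exact (hden y hy).ne'
  -- integrability of rpow on Ioo
  have hrint : IntegrableOn (fun y : ℝ => y ^ (s.re - 1)) (Set.Ioo 0 A) := by
    have := (intervalIntegral.intervalIntegrable_rpow' (a := 0) (b := A)
      (r := s.re - 1) (by linarith))
    rw [intervalIntegrable_iff_integrableOn_Ioc_of_le hA0.le] at this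
    exact this.mono_set Set.Ioo_subset_Ioc_self
  -- norm of cpow
  have hnorm : ∀ y : ℝ, 0 < y → ‖(y : ℂ) ^ (s - 1)‖ = y ^ (s.re - 1) := by
    intro y hy
    rw [Complex.norm_cpow_eq_rpow_re_of_pos hy]
    norm_num
  -- Part 1: integrability of F on Ioo 0 A
  have hFint : IntegrableOn F (Set.Ioo 0 A) := by
    apply IntegrableOn.congr_fun _ (fun y hy => (hFe y hy).symm) measurableSet_Ioo
    apply Integrable.mono' (hrint.const_mul 2)
      (hcont.aestronglyMeasurable measurableSet_Ioo)
    filter_upwards [ae_restrict_mem measurableSet_Ioo] with y hy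
    rw [norm_mul, hnorm y hy.1]
    have : ‖(((A * B) / (A * B - y) : ℝ) : ℂ)‖ ≤ 2 := by
      rw [Complex.norm_real, Real.norm_of_nonneg (hfrac0 y hy)]
      exact hfrac y hy
    calc y ^ (s.re - 1) * ‖(((A * B) / (A * B - y) : ℝ) : ℂ)‖
        ≤ y ^ (s.re - 1) * 2 := by
          apply mul_le_mul_of_nonneg_left this (Real.rpow_nonneg hy.1.le _)
      _ = 2 * y ^ (s.re - 1) := by ring
  have hFint' : IntegrableOn F (Set.Ioi 0) := by
    have h1 : IntegrableOn F (Set.Ici A) :=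
      (integrableOn_zero : IntegrableOn (fun _ : ℝ => (0:ℂ)) (Set.Ici A) _).congr_fun
        (fun y hy => (hF0 y hy).symm) measurableSet_Ici
    exact (hFint.union h1).mono_set (by
      intro y hy
      rcases lt_or_ge y A with h | h
      · exact Or.inl ⟨hy, h⟩
      · exact Or.inr h)
  refine ⟨hFint', ?_, ?_⟩
  -- Part 2: summability
  · have hsum : Summable (fun k : ℕ => (1/2 : ℝ) ^ k * (1 / s.re)) :=
      (summable_geometric_of_lt_one (by norm_num) (by norm_num)).mul_right _
    apply Summable.of_nonneg_of_le (fun k => norm_nonneg _) _ hsum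
    intro k
    have h1 : ‖((B : ℂ))⁻¹ ^ k‖ ≤ (1/2 : ℝ) ^ k := by
      rw [norm_pow, norm_inv, Complex.norm_real, Real.norm_of_nonneg hB0.le]
      apply pow_le_pow_left₀ (by positivity)
      rw [inv_le_comm₀ (by positivity) (by norm_num)]
      simpa using hB
    have h2 : s.re ≤ ‖s + (k:ℂ)‖ := by
      calc s.re ≤ (s + (k:ℂ)).re := by simp [Complex.add_re]
        _ ≤ ‖s + (k:ℂ)‖ := Complex.re_le_norm _
    have hsk : (0:ℝ) < ‖s + (k:ℂ)‖ := lt_of_lt_of_le hs h2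
    rw [norm_div]
    calc ‖((B:ℂ))⁻¹ ^ k‖ / ‖s + (k:ℂ)‖ ≤ (1/2:ℝ)^k / s.re :=
          div_le_div₀ (by positivity) h1 hs h2
      _ = (1/2:ℝ)^k * (1 / s.re) := by ring
  -- Part 3: the integral identity
  · -- Part 3
    set G : ℕ → ℝ → ℂ := fun k y => ((A*B : ℝ):ℂ)⁻¹ ^ k * (y:ℂ) ^ (s - 1 + k) with hG
    have hABne : ((A*B : ℝ):ℂ) ≠ 0 := by
      exact_mod_cast Complex.ofReal_ne_zero.2 hC0.ne'
    have hAne : ((A : ℝ):ℂ) ≠ 0 := Complex.ofReal_ne_zero.2 hA0.ne'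
    have hskne : ∀ k : ℕ, s + (k:ℂ) ≠ 0 := by
      intro k h
      have := congrArg Complex.re h
      simp [Complex.add_re] at this
      have : (0:ℝ) ≤ (k:ℝ) := Nat.cast_nonneg k
      linarith
    have hre : ∀ k : ℕ, -1 < (s - 1 + k).re := by
      intro k
      simp only [Complex.add_re, Complex.sub_re, Complex.one_re, Complex.natCast_re]
      have : (0:ℝ) ≤ (k:ℝ) := Nat.cast_nonneg k
      linarith
    have hGint : ∀ k : ℕ, IntegrableOn (G k) (Set.Ioo 0 A) := by
      intro k
      have := intervalIntegral.intervalIntegrable_cpow' (a := 0) (b := A) (hre k)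
      rw [intervalIntegrable_iff_integrableOn_Ioc_of_le hA0.le] at this
      exact (this.mono_set Set.Ioo_subset_Ioc_self).const_mul _
    -- value of each integral
    have hGval : ∀ k : ℕ, (∫ y in Set.Ioo (0:ℝ) A, G k y)
        = (A:ℂ) ^ s * (((B:ℂ))⁻¹ ^ k / (s + k)) := by
      intro k
      rw [hG]
      simp only
      rw [integral_const_mul, Measure.restrict_congr_set MeasureTheory.Ioo_ae_eq_Ioc,
        ← intervalIntegral.integral_of_le hA0.le,
        integral_cpow (Or.inl (hre k))]
      have h1 : s - 1 + (k:ℂ) + 1 = s + k := by ring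
      rw [h1, Complex.ofReal_zero, Complex.zero_cpow (hskne k), sub_zero]
      have h2 : ((A:ℝ):ℂ) ^ (s + (k:ℂ)) = (A:ℂ) ^ s * (A:ℂ) ^ (k:ℕ) := by
        rw [Complex.cpow_add _ _ hAne, Complex.cpow_natCast]
      rw [h2]
      have h3 : ((A*B : ℝ):ℂ)⁻¹ ^ k * (A:ℂ) ^ (k:ℕ) = ((B:ℂ))⁻¹ ^ k := by
        rw [← mul_pow]
        congr 1
        push_cast
        rw [mul_inv, mul_comm ((A:ℂ))⁻¹, mul_assoc, inv_mul_cancel₀ hAne, mul_one]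
      calc ((A*B : ℝ):ℂ)⁻¹ ^ k * ((A:ℂ) ^ s * (A:ℂ) ^ (k:ℕ) / (s + k))
          = (((A*B : ℝ):ℂ)⁻¹ ^ k * (A:ℂ) ^ (k:ℕ)) * ((A:ℂ) ^ s / (s + k)) := by ring
        _ = (A:ℂ) ^ s * (((B:ℂ))⁻¹ ^ k / (s + k)) := by rw [h3]; ring
    -- summability of norms of integrals
    set I : ℝ := ∫ y in Set.Ioo (0:ℝ) A, y ^ (s.re - 1) with hI
    have hI0 : 0 ≤ I := setIntegral_nonneg measurableSet_Ioo
      (fun y hy => Real.rpow_nonneg hy.1.le _)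
    have hGnorm : ∀ k : ℕ, (∫ y in Set.Ioo (0:ℝ) A, ‖G k y‖) ≤ (1/2:ℝ)^k * I := by
      intro k
      rw [hI, ← integral_const_mul]
      apply setIntegral_mono_on (hGint k).norm
        ((hrint.const_mul _)) measurableSet_Ioo
      intro y hy
      rw [hG]
      simp only [norm_mul, norm_pow, norm_inv, Complex.norm_real]
      rw [Real.norm_of_nonneg hA0.le, Real.norm_of_nonneg hB0.le]
      have hy0 : (0:ℝ) < y := hy.1
      have hcp : ‖(y:ℂ) ^ (s - 1 + k)‖ = y ^ (s.re - 1 + k) := by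
        rw [Complex.norm_cpow_eq_rpow_re_of_pos hy0]
        simp [Complex.add_re, Complex.sub_re]
      rw [hcp]
      have hsplit : y ^ (s.re - 1 + (k:ℝ)) = y ^ (s.re - 1) * y ^ (k:ℕ) := by
        rw [Real.rpow_add hy0, Real.rpow_natCast]
      rw [hsplit]
      have hyA : y ^ (k:ℕ) ≤ A ^ (k:ℕ) := pow_le_pow_left₀ hy0.le hy.2.le k
      calc (A*B)⁻¹ ^ k * (y ^ (s.re - 1) * y ^ (k:ℕ))
          ≤ (A*B)⁻¹ ^ k * (y ^ (s.re - 1) * A ^ (k:ℕ)) := by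
            apply mul_le_mul_of_nonneg_left _ (by positivity)
            exact mul_le_mul_of_nonneg_left hyA (Real.rpow_nonneg hy0.le _)
        _ = ((A*B)⁻¹ * A) ^ k * y ^ (s.re - 1) := by rw [mul_pow]; ring
        _ ≤ (1/2:ℝ)^k * y ^ (s.re - 1) := by
            apply mul_le_mul_of_nonneg_right _ (Real.rpow_nonneg hy0.le _)
            apply pow_le_pow_left₀ (by positivity)
            have h4 : ((A*B)⁻¹ * A) = B⁻¹ := by
              field_simp
            rw [h4, inv_le_comm₀ (by positivity) (by norm_num)]
            simpa using hB
    have hGsum : Summable (fun k : ℕ => ∫ y in Set.Ioo (0:ℝ) A, ‖G k y‖) := by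
      apply Summable.of_nonneg_of_le
        (fun k => setIntegral_nonneg measurableSet_Ioo (fun y _ => norm_nonneg _)) hGnorm
      exact (summable_geometric_of_lt_one (by norm_num) (by norm_num)).mul_right _
    -- pointwise series identity on Ioo 0 A
    have heqF : Set.EqOn F (fun y => ∑' k : ℕ, G k y) (Set.Ioo (0:ℝ) A) := by
      intro y hy
      have hy0 : ((y:ℝ):ℂ) ≠ 0 := Complex.ofReal_ne_zero.2 hy.1.ne'
      have hr : ‖(y:ℂ) / ((A*B:ℝ):ℂ)‖ < 1 := by
        rw [norm_div, Complex.norm_real, Complex.norm_real,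
          Real.norm_of_nonneg hy.1.le, Real.norm_of_nonneg hC0.le, div_lt_one hC0]
        nlinarith [hy.2]
      show F y = ∑' k : ℕ, G k y
      have hterm : ∀ k : ℕ, G k y = (y:ℂ) ^ (s-1) * ((y:ℂ) / ((A*B:ℝ):ℂ)) ^ k := by
        intro k
        rw [hG]
        simp only
        rw [Complex.cpow_add _ _ hy0, Complex.cpow_natCast, div_pow, div_eq_mul_inv, ← inv_pow]
        ring
      rw [show (∑' k : ℕ, G k y) = ∑' k : ℕ, (y:ℂ) ^ (s-1) * ((y:ℂ) / ((A*B:ℝ):ℂ)) ^ k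
          from tsum_congr hterm, tsum_mul_left, tsum_geometric_of_norm_lt_one hr,
        hFe y hy]
      congr 1
      have hden' : ((A*B - y : ℝ):ℂ) ≠ 0 := Complex.ofReal_ne_zero.2 (hden y hy).ne'
      have h5 : (1 : ℂ) - (y:ℂ)/((A*B:ℝ):ℂ) = ((A*B - y : ℝ):ℂ) / ((A*B:ℝ):ℂ) := by
        rw [eq_div_iff hABne, sub_mul, one_mul, div_mul_cancel₀ _ hABne]
        push_cast
        ring
      rw [h5, inv_div, Complex.ofReal_div]
    -- reduce the integral to Ioo 0 A
    have hsub : (∫ y in Set.Ioi (0:ℝ), F y) = ∫ y in Set.Ioo (0:ℝ) A, F y := by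
      rw [← setIntegral_eq_of_subset_of_forall_diff_eq_zero measurableSet_Ioi
        (Set.Ioo_subset_Ioi_self) ?_]
      intro y hy
      apply hF0
      rcases lt_or_ge y A with h | h
      · exact absurd ⟨hy.1, h⟩ hy.2
      · exact h
    calc (∫ y in Set.Ioi (0:ℝ), F y) = ∫ y in Set.Ioo (0:ℝ) A, F y := hsub
      _ = ∫ y in Set.Ioo (0:ℝ) A, ∑' k : ℕ, G k y := setIntegral_congr_fun measurableSet_Ioo heqF
      _ = ∑' k : ℕ, ∫ y in Set.Ioo (0:ℝ) A, G k y :=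
          (integral_tsum_of_summable_integral_norm hGint hGsum).symm
      _ = ∑' k : ℕ, (A:ℂ) ^ s * (((B:ℂ))⁻¹ ^ k / (s + k)) := tsum_congr hGval
      _ = (A:ℂ) ^ s * ∑' k : ℕ, ((B:ℂ))⁻¹ ^ k / (s + k) := tsum_mul_left
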